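/- Let m, n ≥ 1 and let S ⊆ {0, 1, …, m+n−1} be any set of sizes with |S| = m. Color a subset X of [m+n−1] blue if |X| ∈ S and red otherwise. Then the family of blue sets contains no weak copy of Q_m and the family of red sets contains no weak copy of Q_n. Consequently, R_w(Q_m, Q_n) ≥ m + n. -/
import Mathlib


/-- A family `F` of subsets of `[N]` (modeled as `Finset (Fin N)`) contains a weak copy
of the Boolean lattice `Q_m`. -/
def ContainsWeakCopy (m N : ℕ) (F : Set (Finset (Fin N))) : Prop :=
  ∃ φ : Finset (Fin m) → Finset (Fin N),
    Function.Injective φ ∧ (∀ A, φ A ∈ F) ∧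
    ∀ A B : Finset (Fin m), A ⊆ B → φ A ⊆ φ B

lemma no_copy_of_few_sizes {k N : ℕ} {T : Finset ℕ} (hT : T.card ≤ k)
    {F : Set (Finset (Fin N))} (hF : ∀ X ∈ F, X.card ∈ T) :
    ¬ ContainsWeakCopy k N F := by
  rintro ⟨φ, hinj, hmem, hmono⟩
  -- the chain C i = {0, ..., i-1} in Fin k
  have hCbound : ∀ (i : Fin (k+1)), ∀ a ∈ Finset.range (i : ℕ), a < k :=
    fun i a ha => lt_of_lt_of_le (Finset.mem_range.mp ha) (Nat.lt_succ_iff.mp i.isLt)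
  set C : Fin (k+1) → Finset (Fin k) :=
    fun i => (Finset.range (i : ℕ)).attachFin (hCbound i) with hC
  have hCsub : ∀ {i j : Fin (k+1)}, i ≤ j → C i ⊆ C j := by
    intro i j hij x hx
    rw [hC, Finset.mem_attachFin] at hx ⊢
    exact Finset.range_subset_range.mpr hij hx
  have hCcard : ∀ i : Fin (k+1), (C i).card = (i : ℕ) := by
    intro i; rw [hC]; simp [Finset.card_attachFin]
  have hsm : StrictMono (fun i : Fin (k+1) => (φ (C i)).card) := by
    intro i j hij
    have hsub : φ (C i) ⊆ φ (C j) := hmono _ _ (hCsub hij.le)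
    have hne : φ (C i) ≠ φ (C j) := by
      intro h
      have := hinj h
      have : (C i).card = (C j).card := by rw [this]
      rw [hCcard, hCcard] at this
      exact absurd (Fin.ext this) hij.ne
    exact Finset.card_lt_card (lt_of_le_of_ne hsub hne)
  have hle : (Finset.univ : Finset (Fin (k+1))).card ≤ T.card := by
    apply Finset.card_le_card_of_injOn (fun i => (φ (C i)).card)
    · intro i _; exact hF _ (hmem (C i))
    · exact fun a _ b _ h => hsm.injective h
  simp only [Finset.card_univ, Fintype.card_fin] at hle
  omega

/-- The layered coloring: for `m, n ≥ 1` and any set `S ⊆ {0, 1, …, m+n−1}` of sizes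
with `|S| = m`, coloring a subset `X ⊆ [m+n−1]` blue when `|X| ∈ S` and red otherwise,
the blue family contains no weak copy of `Q_m` and the red family contains no weak
copy of `Q_n`; hence `R_w(Q_m, Q_n) ≥ m + n`. -/
theorem layered_coloring_weak_lower (m n : ℕ) (hm : 1 ≤ m) (hn : 1 ≤ n)
    (S : Finset ℕ) (hS : S ⊆ Finset.range (m + n)) (hcard : S.card = m) :
    ¬ ContainsWeakCopy m (m + n - 1)
        {X : Finset (Fin (m + n - 1)) | X.card ∈ S} ∧
    ¬ ContainsWeakCopy n (m + n - 1)
        {X : Finset (Fin (m + n - 1)) | X.card ∉ S} := by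
  constructor
  · exact no_copy_of_few_sizes (le_of_eq hcard) (fun X hX => hX)
  · apply no_copy_of_few_sizes (T := Finset.range (m + n) \ S)
    · rw [Finset.card_sdiff_of_subset hS, Finset.card_range, hcard]; omega
    · intro X hX
      rw [Finset.mem_sdiff, Finset.mem_range]
      refine ⟨?_, hX⟩
      have := Finset.card_le_card (Finset.subset_univ X)
      simp only [Finset.card_univ, Fintype.card_fin] at this
      omega
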